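/- Let Â = [[A₁₁, b],[cᵀ, α]] be a (k+1)×(k+1) real matrix whose leading k×k block A₁₁ is nonsingular, let ρ ≥ 1, and suppose A₁₁ has global ρ-maximum volume in Â (i.e., ρ·|det(A₁₁)| ≥ |det(B')| for every k×k submatrix B' of Â). Then the Schur complement γ = α − cᵀA₁₁⁻¹b satisfies |γ| ≤ ρ(k+1)·σ_{k+1}(Â). -/

import Mathlib

open Matrix

/-- The `k`-th largest value (1-indexed) of a finite family of reals. -/
noncomputable def kthLargest {ι : Type*} [Fintype ι] (f : ι → ℝ) (k : ℕ) : ℝ :=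
  ((Finset.univ.val.map f).sort (· ≤ ·)).getD (Fintype.card ι - k) 0

/-- The `k`-th largest singular value (1-indexed) of a real matrix,
i.e. the square root of the `k`-th largest eigenvalue of `Aᴴ * A`. -/
noncomputable def singularValue {m n : Type*} [Fintype m] [Fintype n] [DecidableEq n]
    (A : Matrix m n ℝ) (k : ℕ) : ℝ :=
  Real.sqrt (kthLargest (Matrix.isHermitian_conjTranspose_mul_self A).eigenvalues k)

lemma le_kthLargest_of_forall_le {ι : Type*} [Fintype ι] [Nonempty ι] (f : ι → ℝ) (m : ℝ)
    (h : ∀ i, m ≤ f i) : m ≤ kthLargest f (Fintype.card ι) := by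
  unfold kthLargest
  have hlen : ((Finset.univ.val.map f).sort (· ≤ ·)).length = Fintype.card ι := by
    rw [Multiset.length_sort, Multiset.card_map]; rfl
  have hpos : 0 < ((Finset.univ.val.map f).sort (· ≤ ·)).length := by
    rw [hlen]; exact Fintype.card_pos
  rw [Nat.sub_self, List.getD_eq_getElem _ 0 hpos]
  have hmem : ((Finset.univ.val.map f).sort (· ≤ ·))[0] ∈ Finset.univ.val.map f := by
    rw [← Multiset.mem_sort (· ≤ ·)]
    exact List.getElem_mem hpos
  obtain ⟨i, _, hi⟩ := Multiset.mem_map.mp hmem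
  rw [← hi]; exact h i

lemma det_hat {k : ℕ} (A₁₁ : Matrix (Fin k) (Fin k) ℝ) (hA : IsUnit A₁₁.det)
    (b c : Fin k → ℝ) (α : ℝ) :
    (Matrix.fromBlocks A₁₁ (Matrix.of fun i (_ : Unit) => b i)
      (Matrix.of fun (_ : Unit) j => c j) (Matrix.of fun (_ : Unit) (_ : Unit) => α)).det
      = A₁₁.det * (α - c ⬝ᵥ A₁₁⁻¹ *ᵥ b) := by
  haveI := A₁₁.invertibleOfIsUnitDet hA
  rw [Matrix.det_fromBlocks₁₁]
  congr 1
  rw [Matrix.det_unique]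
  simp [Matrix.mul_apply, Matrix.invOf_eq_nonsing_inv, dotProduct, Matrix.mulVec,
    dotProduct, Finset.mul_sum, Finset.sum_mul, mul_assoc]
  rw [Finset.sum_comm]

lemma mulVec_sq_sum_le {n : Type*} [Fintype n] [Nonempty n] (M : Matrix n n ℝ) (E : ℝ)
    (hE : ∀ i j, |M i j| ≤ E) (w : n → ℝ) :
    ∑ i, (M *ᵥ w) i ^ 2 ≤ (Fintype.card n : ℝ) ^ 2 * E ^ 2 * ∑ j, w j ^ 2 := by
  have hE0 : 0 ≤ E := le_trans (abs_nonneg _) (hE (Classical.arbitrary n) (Classical.arbitrary n))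
  have h1 : ∀ i, |(M *ᵥ w) i| ≤ E * ∑ j, |w j| := by
    intro i
    calc |∑ j, M i j * w j| ≤ ∑ j, |M i j * w j| := Finset.abs_sum_le_sum_abs _ _
      _ ≤ ∑ j, E * |w j| := by
          refine Finset.sum_le_sum fun j _ => ?_
          rw [abs_mul]
          exact mul_le_mul_of_nonneg_right (hE i j) (abs_nonneg _)
      _ = E * ∑ j, |w j| := by rw [Finset.mul_sum]
  have h2 : (∑ j, |w j|) ^ 2 ≤ (Fintype.card n : ℝ) * ∑ j, w j ^ 2 := by
    have := sq_sum_le_card_mul_sum_sq (s := (Finset.univ : Finset n)) (f := fun j => |w j|)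
    simpa [sq_abs, Finset.card_univ] using this
  calc ∑ i, (M *ᵥ w) i ^ 2 ≤ ∑ _i : n, (E * ∑ j, |w j|) ^ 2 := by
        refine Finset.sum_le_sum fun i _ => ?_
        rw [← sq_abs]
        exact pow_le_pow_left₀ (abs_nonneg _) (h1 i) 2
    _ = (Fintype.card n : ℝ) * (E ^ 2 * (∑ j, |w j|) ^ 2) := by
        rw [Finset.sum_const, Finset.card_univ, nsmul_eq_mul, mul_pow]
    _ ≤ (Fintype.card n : ℝ) * (E ^ 2 * ((Fintype.card n : ℝ) * ∑ j, w j ^ 2)) := by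
        refine mul_le_mul_of_nonneg_left (mul_le_mul_of_nonneg_left h2 (by positivity)) (by positivity)
    _ = (Fintype.card n : ℝ) ^ 2 * E ^ 2 * ∑ j, w j ^ 2 := by ring

lemma adj_bound {k : ℕ} (Ahat : Matrix (Fin k ⊕ Unit) (Fin k ⊕ Unit) ℝ) (K : ℝ)
    (hmax : ∀ (r cc : Fin k → Fin k ⊕ Unit), Function.Injective r → Function.Injective cc →
      |(Ahat.submatrix r cc).det| ≤ K) (i j : Fin k ⊕ Unit) :
    |Ahat.adjugate i j| ≤ K := by
  have hcard : Fintype.card (Fin k ⊕ Unit) = k + 1 := by simp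
  let e : Fin (k + 1) ≃ (Fin k ⊕ Unit) := (Fintype.equivFinOfCardEq hcard).symm
  obtain ⟨i', rfl⟩ := e.surjective i
  obtain ⟨j', rfl⟩ := e.surjective j
  have h1 : Ahat.adjugate (e i') (e j') = (Ahat.submatrix e e).adjugate i' j' := by
    rw [Matrix.adjugate_submatrix_equiv_self]; rfl
  rw [h1, Matrix.adjugate_fin_succ_eq_det_submatrix]
  rw [abs_mul, abs_pow, abs_neg, abs_one, one_pow, one_mul]
  rw [Matrix.submatrix_submatrix]
  exact hmax _ _ (e.injective.comp (Fin.succAbove_right_injective))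
    (e.injective.comp (Fin.succAbove_right_injective))

lemma eig_lb {n : Type*} [Fintype n] [DecidableEq n] [Nonempty n] (M : Matrix n n ℝ)
    (hu : IsUnit M.det) (K : ℝ) (hK : 0 < K) (hb : ∀ i j, |M⁻¹ i j| ≤ K) (j : n) :
    (1 / ((Fintype.card n : ℝ) * K)) ^ 2 ≤ (isHermitian_conjTranspose_mul_self M).eigenvalues j := by
  have hH := isHermitian_conjTranspose_mul_self M
  set μ := hH.eigenvalues j with hμ
  set v : n → ℝ := ⇑(hH.eigenvectorBasis j) with hv
  have hmv : (Mᴴ * M) *ᵥ v = μ • v := hH.mulVec_eigenvectorBasis j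
  have hvne : v ≠ 0 := by
    intro h0
    apply hH.eigenvectorBasis.orthonormal.ne_zero j
    ext i
    exact congrFun h0 i
  have hS0 : 0 < ∑ i, v i ^ 2 := by
    obtain ⟨i, hi⟩ := Function.ne_iff.mp hvne
    refine Finset.sum_pos' (fun i _ => sq_nonneg _) ⟨i, Finset.mem_univ i, ?_⟩
    exact lt_of_le_of_ne (sq_nonneg _) (Ne.symm (pow_ne_zero 2 hi))
  have key : ∑ i, (M *ᵥ v) i ^ 2 = μ * ∑ i, v i ^ 2 := by
    have h1 : v ⬝ᵥ ((Mᴴ * M) *ᵥ v) = (M *ᵥ v) ⬝ᵥ (M *ᵥ v) := by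
      rw [← Matrix.mulVec_mulVec, Matrix.dotProduct_mulVec]
      congr 1
      rw [Matrix.conjTranspose_eq_transpose_of_trivial, Matrix.vecMul_transpose]
    rw [hmv, dotProduct_smul] at h1
    simp only [dotProduct, smul_eq_mul, Finset.mul_sum] at h1
    simp only [sq]
    rw [← h1, Finset.mul_sum]
  have hvrec : v = M⁻¹ *ᵥ (M *ᵥ v) := by
    rw [Matrix.mulVec_mulVec, Matrix.nonsing_inv_mul M hu, Matrix.one_mulVec]
  have hbound : ∑ i, v i ^ 2 ≤ (Fintype.card n : ℝ) ^ 2 * K ^ 2 * (μ * ∑ i, v i ^ 2) := by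
    calc ∑ i, v i ^ 2 = ∑ i, (M⁻¹ *ᵥ (M *ᵥ v)) i ^ 2 := by rw [← hvrec]
      _ ≤ (Fintype.card n : ℝ) ^ 2 * K ^ 2 * ∑ i, (M *ᵥ v) i ^ 2 :=
          mulVec_sq_sum_le M⁻¹ K hb (M *ᵥ v)
      _ = (Fintype.card n : ℝ) ^ 2 * K ^ 2 * (μ * ∑ i, v i ^ 2) := by rw [key]
  have hcard : (0:ℝ) < (Fintype.card n : ℝ) := by exact_mod_cast Fintype.card_pos
  have h1 : 1 ≤ (Fintype.card n : ℝ) ^ 2 * K ^ 2 * μ := by nlinarith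
  rw [div_pow, one_pow, div_le_iff₀ (by positivity)]
  calc 1 ≤ (Fintype.card n : ℝ) ^ 2 * K ^ 2 * μ := h1
    _ = μ * ((Fintype.card n : ℝ) * K) ^ 2 := by ring

theorem schur_entry_le_of_global_maxvol {k : ℕ} (A₁₁ : Matrix (Fin k) (Fin k) ℝ)
    (hA : IsUnit A₁₁.det) (b c : Fin k → ℝ) (α : ℝ) (ρ : ℝ) (hρ : 1 ≤ ρ)
    (hmax : ∀ (r cc : Fin k → Fin k ⊕ Unit),
      Function.Injective r → Function.Injective cc →
      |((Matrix.fromBlocks A₁₁ (Matrix.of fun i (_ : Unit) => b i)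
          (Matrix.of fun (_ : Unit) j => c j) (Matrix.of fun (_ : Unit) (_ : Unit) => α)).submatrix r cc).det|
        ≤ ρ * |A₁₁.det|) :
    |α - c ⬝ᵥ A₁₁⁻¹ *ᵥ b| ≤ ρ * (k + 1) *
      singularValue (Matrix.fromBlocks A₁₁ (Matrix.of fun i (_ : Unit) => b i)
        (Matrix.of fun (_ : Unit) j => c j) (Matrix.of fun (_ : Unit) (_ : Unit) => α)) (k + 1) := by
  set Ahat := Matrix.fromBlocks A₁₁ (Matrix.of fun i (_ : Unit) => b i)
    (Matrix.of fun (_ : Unit) j => c j) (Matrix.of fun (_ : Unit) (_ : Unit) => α) with hAhat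
  set γ := α - c ⬝ᵥ A₁₁⁻¹ *ᵥ b with hγdef
  have hρ0 : (0:ℝ) < ρ := lt_of_lt_of_le one_pos hρ
  have hdet : Ahat.det = A₁₁.det * γ := det_hat A₁₁ hA b c α
  have hσ0 : 0 ≤ singularValue Ahat (k + 1) := Real.sqrt_nonneg _
  rcases eq_or_ne γ 0 with hγ | hγ
  · rw [hγ, abs_zero]
    positivity
  · have hA0 : A₁₁.det ≠ 0 := hA.ne_zero
    have hd0 : Ahat.det ≠ 0 := by rw [hdet]; exact mul_ne_zero hA0 hγ
    have hu : IsUnit Ahat.det := isUnit_iff_ne_zero.mpr hd0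
    set K := ρ * |A₁₁.det| / |Ahat.det| with hK
    have hKpos : 0 < K := by
      have := abs_pos.mpr hA0
      have := abs_pos.mpr hd0
      positivity
    have hinv : ∀ i j, |Ahat⁻¹ i j| ≤ K := by
      intro i j
      rw [Matrix.inv_def, Ring.inverse_eq_inv]
      simp only [Matrix.smul_apply, smul_eq_mul, abs_mul, abs_inv]
      rw [hK, div_eq_inv_mul]
      exact mul_le_mul_of_nonneg_left (adj_bound Ahat (ρ * |A₁₁.det|) hmax i j)
        (inv_nonneg.mpr (abs_nonneg _))
    have hcard : Fintype.card (Fin k ⊕ Unit) = k + 1 := by simp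
    have hσ : 1 / (((k : ℝ) + 1) * K) ≤ singularValue Ahat (k + 1) := by
      unfold singularValue
      have hall : ∀ j, (1 / (((k:ℝ) + 1) * K)) ^ 2
          ≤ (isHermitian_conjTranspose_mul_self Ahat).eigenvalues j := by
        intro j
        have := eig_lb Ahat hu K hKpos hinv j
        rwa [hcard, Nat.cast_add, Nat.cast_one] at this
      calc 1 / (((k:ℝ) + 1) * K)
          = Real.sqrt ((1 / (((k:ℝ) + 1) * K)) ^ 2) := (Real.sqrt_sq (by positivity)).symm
        _ ≤ _ := by
            apply Real.sqrt_le_sqrt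
            rw [← hcard]
            exact le_kthLargest_of_forall_le _ _ hall
    have habs : |Ahat.det| = |A₁₁.det| * |γ| := by rw [hdet, abs_mul]
    have hval : ρ * ((k:ℝ) + 1) * (1 / (((k:ℝ) + 1) * K)) = |γ| := by
      rw [hK, habs]
      have hA1 : |A₁₁.det| ≠ 0 := abs_ne_zero.mpr hA0
      have hγ1 : |γ| ≠ 0 := abs_ne_zero.mpr hγ
      have hk1 : ((k:ℝ) + 1) ≠ 0 := by positivity
      field_simp
    calc |γ| = ρ * ((k:ℝ) + 1) * (1 / (((k:ℝ) + 1) * K)) := hval.symm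
      _ ≤ ρ * ((k:ℝ) + 1) * singularValue Ahat (k + 1) := by
          exact mul_le_mul_of_nonneg_left hσ (by positivity)
      _ = ρ * ((k:ℝ) + 1) * singularValue Ahat (k + 1) := rfl
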